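/- Fix b > 0 and consider the scalar ODE f'(s) = −(2 − f²)f / (f² + √b·(2 − f²)). For every initial condition f(0) ∈ (0, √2), the maximal solution is defined for all s ∈ ℝ, satisfies f(s) ∈ (0, √2) for all s, is strictly decreasing, and satisfies f(s) → √2 as s → −∞ and f(s) → 0 as s → +∞. -/

import Mathlib

open Set Filter Topology

namespace ProfileODE

noncomputable def F (c : ℝ) (x : ℝ) : ℝ := c * Real.log x - Real.log (2 - x ^ 2) / 2

lemma mem_facts {x : ℝ} (hx : x ∈ Ioo 0 (Real.sqrt 2)) : 0 < x ∧ 0 < 2 - x ^ 2 := by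
  refine ⟨hx.1, ?_⟩
  have : x ^ 2 < 2 := (Real.lt_sqrt hx.1.le).mp hx.2
  linarith

lemma F_hasDerivAt {c x : ℝ} (hx : x ∈ Ioo 0 (Real.sqrt 2)) :
    HasDerivAt (F c) (c / x + x / (2 - x ^ 2)) x := by
  obtain ⟨hx0, hx2⟩ := mem_facts hx
  have h1 : HasDerivAt (fun x : ℝ => c * Real.log x) (c * x⁻¹) x :=
    (Real.hasDerivAt_log hx0.ne').const_mul c
  have h2 : HasDerivAt (fun x : ℝ => 2 - x ^ 2) (-(2 * x)) x := by
    simpa using ((hasDerivAt_pow 2 x).const_sub 2)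
  have h3 : HasDerivAt (fun x : ℝ => Real.log (2 - x ^ 2)) ((2 - x ^ 2)⁻¹ * (-(2 * x))) x :=
    by have h := (Real.hasDerivAt_log hx2.ne').comp x h2; exact h
  have h : HasDerivAt (fun y => c * Real.log y - Real.log (2 - y ^ 2) / 2)
      (c * x⁻¹ - (2 - x ^ 2)⁻¹ * -(2 * x) / 2) x := h1.sub (h3.div_const 2)
  convert h using 1
  · rfl
  field_simp [hx0.ne', hx2.ne']
  ring

lemma F_deriv_pos {c x : ℝ} (hc : 0 < c) (hx : x ∈ Ioo 0 (Real.sqrt 2)) :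
    0 < c / x + x / (2 - x ^ 2) := by
  obtain ⟨hx0, hx2⟩ := mem_facts hx
  positivity

lemma F_strictMonoOn {c : ℝ} (hc : 0 < c) : StrictMonoOn (F c) (Ioo 0 (Real.sqrt 2)) := by
  apply strictMonoOn_of_deriv_pos (convex_Ioo _ _)
  · exact fun x hx => (F_hasDerivAt hx).continuousAt.continuousWithinAt
  · intro x hx
    rw [interior_Ioo] at hx
    rw [(F_hasDerivAt hx).deriv]
    exact F_deriv_pos hc hx

lemma sqrt_two_pos : (0 : ℝ) < Real.sqrt 2 := Real.sqrt_pos.mpr (by norm_num)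

lemma F_tendsto_atBot {c : ℝ} (hc : 0 < c) :
    Tendsto (F c) (𝓝[>] (0 : ℝ)) atBot := by
  have h1 : Tendsto (fun x : ℝ => c * Real.log x) (𝓝[>] (0 : ℝ)) atBot :=
    Real.tendsto_log_nhdsGT_zero.const_mul_atBot hc
  have h2 : Tendsto (fun x : ℝ => -(Real.log (2 - x ^ 2) / 2)) (𝓝[>] (0 : ℝ))
      (𝓝 (-(Real.log (2 - (0:ℝ) ^ 2) / 2))) := by
    apply ContinuousAt.continuousWithinAt
    have : ContinuousAt (fun x : ℝ => 2 - x ^ 2) 0 := by fun_prop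
    exact (((Real.continuousAt_log (by norm_num)).comp this).div_const 2).neg
  have := h1.atBot_add h2
  apply this.congr
  intro x
  simp [F]
  ring

lemma F_tendsto_atTop {c : ℝ} (hc : 0 < c) :
    Tendsto (F c) (𝓝[<] (Real.sqrt 2)) atTop := by
  have h0 : Tendsto (fun x : ℝ => 2 - x ^ 2) (𝓝[<] (Real.sqrt 2)) (𝓝[>] (0 : ℝ)) := by
    rw [tendsto_nhdsWithin_iff]
    constructor
    · have : ContinuousAt (fun x : ℝ => 2 - x ^ 2) (Real.sqrt 2) := by fun_prop
      have h : Tendsto (fun x : ℝ => 2 - x ^ 2) (𝓝[<] Real.sqrt 2) (𝓝 (2 - Real.sqrt 2 ^ 2)) :=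
        this.continuousWithinAt
      simpa [Real.sq_sqrt (by norm_num : (0:ℝ) ≤ 2)] using h
    · filter_upwards [Ioo_mem_nhdsLT_of_mem (⟨sqrt_two_pos, le_refl _⟩ : Real.sqrt 2 ∈ Ioc 0 (Real.sqrt 2))] with x hx
      exact (mem_facts hx).2
  have h1 : Tendsto (fun x : ℝ => -(Real.log (2 - x ^ 2) / 2)) (𝓝[<] Real.sqrt 2) atTop := by
    have h := (Real.tendsto_log_nhdsGT_zero.comp h0).atBot_div_const
      (by norm_num : (0:ℝ) < 2)
    exact tendsto_neg_atBot_atTop.comp h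
  have h2 : Tendsto (fun x : ℝ => c * Real.log x) (𝓝[<] Real.sqrt 2)
      (𝓝 (c * Real.log (Real.sqrt 2))) := by
    apply ContinuousAt.continuousWithinAt
    exact (Real.continuousAt_log sqrt_two_pos.ne').const_mul c
  have h := h1.atTop_add h2
  apply h.congr
  intro x
  simp [F]
  ring

lemma F_surjOn {c : ℝ} (hc : 0 < c) (y : ℝ) :
    ∃ x, x ∈ Ioo 0 (Real.sqrt 2) ∧ F c x = y := by
  obtain ⟨x₁, hm₁, hy₁⟩ : ∃ x₁, x₁ ∈ Ioo 0 (Real.sqrt 2) ∧ F c x₁ < y := by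
    have hmem : Ioo (0:ℝ) (Real.sqrt 2) ∈ 𝓝[>] (0:ℝ) :=
      Ioo_mem_nhdsGT_of_mem ⟨le_refl _, sqrt_two_pos⟩
    obtain ⟨x, hx1, hx2⟩ :=
      (((F_tendsto_atBot hc).eventually (eventually_lt_atBot y)).and
        (eventually_of_mem hmem fun x hx => hx)).exists
    exact ⟨x, hx2, hx1⟩
  obtain ⟨x₂, hm₂, hy₂⟩ : ∃ x₂, x₂ ∈ Ioo 0 (Real.sqrt 2) ∧ y < F c x₂ := by
    have hmem : Ioo (0:ℝ) (Real.sqrt 2) ∈ 𝓝[<] (Real.sqrt 2) :=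
      Ioo_mem_nhdsLT_of_mem ⟨sqrt_two_pos, le_refl _⟩
    obtain ⟨x, hx1, hx2⟩ :=
      (((F_tendsto_atTop hc).eventually (eventually_gt_atTop y)).and
        (eventually_of_mem hmem fun x hx => hx)).exists
    exact ⟨x, hx2, hx1⟩
  have hlt : x₁ < x₂ := by
    by_contra h
    push_neg at h
    have := (F_strictMonoOn hc).monotoneOn hm₂ hm₁ h
    linarith
  have hsub : Icc x₁ x₂ ⊆ Ioo 0 (Real.sqrt 2) := fun x hx =>
    ⟨lt_of_lt_of_le hm₁.1 hx.1, lt_of_le_of_lt hx.2 hm₂.2⟩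
  have hcont : ContinuousOn (F c) (Icc x₁ x₂) := fun x hx =>
    (F_hasDerivAt (hsub hx)).continuousAt.continuousWithinAt
  obtain ⟨x, hx, hfx⟩ := intermediate_value_Icc hlt.le hcont ⟨hy₁.le, hy₂.le⟩
  exact ⟨x, hsub hx, hfx⟩

end ProfileODE

/-- For `b > 0`, the ODE `f' = −(2−f²)f/(f²+√b(2−f²))` with initial
condition `f(0) ∈ (0,√2)` has a (maximal) solution defined on all of `ℝ`, taking
values in `(0,√2)`, strictly decreasing, with `f(s) → √2` as `s → −∞` and
`f(s) → 0` as `s → +∞`. -/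
theorem holomorphic_plane_profile_ODE
    (b : ℝ) (hb : 0 < b) (f₀ : ℝ) (hf₀ : f₀ ∈ Ioo 0 (Real.sqrt 2)) :
    ∃ f : ℝ → ℝ,
      f 0 = f₀ ∧
      (∀ s : ℝ, HasDerivAt f
        (-((2 - f s ^ 2) * f s) / (f s ^ 2 + Real.sqrt b * (2 - f s ^ 2))) s) ∧
      (∀ s : ℝ, f s ∈ Ioo 0 (Real.sqrt 2)) ∧
      StrictAnti f ∧
      Tendsto f atBot (nhds (Real.sqrt 2)) ∧
      Tendsto f atTop (nhds 0) := by
  set c := Real.sqrt b with hcdef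
  have hc : 0 < c := Real.sqrt_pos.mpr hb
  choose g hmem heq using ProfileODE.F_surjOn hc
  have gmono : StrictMono g := by
    intro y₁ y₂ h
    rcases lt_trichotomy (g y₁) (g y₂) with h' | h' | h'
    · exact h'
    · exfalso; rw [← heq y₁, ← heq y₂, h'] at h; exact lt_irrefl _ h
    · exfalso
      have h2 := ProfileODE.F_strictMonoOn hc (hmem y₂) (hmem y₁) h'
      rw [heq, heq] at h2; linarith
  have gcont : ∀ a, ContinuousAt g a := by
    intro a
    rw [ContinuousAt, tendsto_order]
    constructor
    · intro l hl
      rcases le_or_gt l 0 with h0 | h0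
      · exact Eventually.of_forall fun y => lt_of_le_of_lt h0 (hmem y).1
      · have hlm : l ∈ Ioo 0 (Real.sqrt 2) := ⟨h0, lt_trans hl (hmem a).2⟩
        have hFl : ProfileODE.F c l < a := by
          have h2 := ProfileODE.F_strictMonoOn hc hlm (hmem a) hl
          rwa [heq] at h2
        filter_upwards [Ioi_mem_nhds hFl] with y hy
        by_contra hgy
        push_neg at hgy
        have h3 := (ProfileODE.F_strictMonoOn hc).monotoneOn (hmem y) hlm hgy
        rw [heq] at h3
        exact absurd (lt_of_lt_of_le hy h3) (lt_irrefl _)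
    · intro u hu
      rcases le_or_gt (Real.sqrt 2) u with h0 | h0
      · exact Eventually.of_forall fun y => lt_of_lt_of_le (hmem y).2 h0
      · have hum : u ∈ Ioo 0 (Real.sqrt 2) := ⟨lt_trans (hmem a).1 hu, h0⟩
        have hFu : a < ProfileODE.F c u := by
          have h2 := ProfileODE.F_strictMonoOn hc (hmem a) hum hu
          rwa [heq] at h2
        filter_upwards [Iio_mem_nhds hFu] with y hy
        by_contra hgy
        push_neg at hgy
        have h3 := (ProfileODE.F_strictMonoOn hc).monotoneOn hum (hmem y) hgy
        rw [heq] at h3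
        exact absurd (lt_of_lt_of_le hy h3) (lt_irrefl _)
  have gderiv : ∀ y, HasDerivAt g (c / g y + g y / (2 - g y ^ 2))⁻¹ y := fun y =>
    HasDerivAt.of_local_left_inverse (gcont y) (ProfileODE.F_hasDerivAt (hmem y))
      (ProfileODE.F_deriv_pos hc (hmem y)).ne' (Eventually.of_forall heq)
  set K := ProfileODE.F c f₀ with hK
  have hrange : range g = Ioo 0 (Real.sqrt 2) := by
    apply Subset.antisymm
    · rintro _ ⟨y, rfl⟩; exact hmem y
    · intro x hx
      exact ⟨ProfileODE.F c x,
        (ProfileODE.F_strictMonoOn hc).injOn (hmem _) hx (heq _)⟩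
  refine ⟨fun s => g (K - s), ?_, ?_, fun s => hmem _, ?_, ?_, ?_⟩
  · have h0 : ProfileODE.F c (g (K - 0)) = ProfileODE.F c f₀ := by rw [heq, sub_zero]
    exact (ProfileODE.F_strictMonoOn hc).injOn (hmem _) hf₀ h0
  · intro s
    have haff : HasDerivAt (fun s : ℝ => K - s) (-1) s := by
      simpa using (hasDerivAt_id s).const_sub K
    have h := (gderiv (K - s)).comp s haff
    have h' : HasDerivAt (fun s : ℝ => g (K - s))
        ((c / g (K - s) + g (K - s) / (2 - g (K - s) ^ 2))⁻¹ * (-1)) s := h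
    convert h' using 1
    obtain ⟨hx0, hx2⟩ := ProfileODE.mem_facts (hmem (K - s))
    have hden : 0 < g (K - s) ^ 2 + c * (2 - g (K - s) ^ 2) := by positivity
    field_simp
    ring
  · intro s₁ s₂ h
    exact gmono (by linarith)
  · have h1 : Tendsto (fun s : ℝ => K - s) atBot atTop := by
      simpa [sub_eq_add_neg] using
        tendsto_atTop_add_const_left atBot K (tendsto_neg_atBot_atTop (G := ℝ))
    have hbdd : BddAbove (range g) := by rw [hrange]; exact bddAbove_Ioo
    have h2 := tendsto_atTop_ciSup gmono.monotone hbdd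
    have h3 : ⨆ y, g y = Real.sqrt 2 := by
      rw [iSup, hrange, csSup_Ioo ProfileODE.sqrt_two_pos]
    rw [h3] at h2
    exact h2.comp h1
  · have h1 : Tendsto (fun s : ℝ => K - s) atTop atBot := by
      simpa [sub_eq_add_neg] using
        tendsto_atBot_add_const_left atTop K (tendsto_neg_atTop_atBot (G := ℝ))
    have hbdd : BddBelow (range g) := by rw [hrange]; exact bddBelow_Ioo
    have h2 := tendsto_atBot_ciInf gmono.monotone hbdd
    have h3 : ⨅ y, g y = 0 := by
      rw [iInf, hrange, csInf_Ioo ProfileODE.sqrt_two_pos]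
    rw [h3] at h2
    exact h2.comp h1
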